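/- Let b, c, ν ∈ ℂ with Re(c) > 1 and Re(ν) > -1, and let z > 0 be real. Then for every real ρ > 0, the derivative with respect to the real parameter ρ satisfies ∂/∂ρ [ G_ν^{(b,c)}(z;ρ) ] = -(1/(c-1)) · G_ν^{(b,c-1)}(z;ρ). -/

import Mathlib

open Complex MeasureTheory Real Set

/-- Extended Gamma function `Γ_ρ(x) = ∫_0^∞ t^(x-1) e^(-t-ρ/t) dt`. -/
noncomputable def extGamma (ρ x : ℂ) : ℂ :=
  ∫ t in Ioi (0:ℝ), (t:ℂ) ^ (x - 1) * Complex.exp (-(t:ℂ) - ρ / (t:ℂ))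

/-- Generalized Pochhammer symbol `(c;ρ)_μ = Γ_ρ(c+μ)/Γ(c)`. -/
noncomputable def genPoch (c ρ μ : ℂ) : ℂ := extGamma ρ (c + μ) / Complex.Gamma c

/-- Unified four parameter Bessel function `G_ν^{(b,c)}(z;ρ)` with complex order,
powers being principal complex powers. -/
noncomputable def unifiedG (b c ν ρ z : ℂ) : ℂ :=
  ∑' k : ℕ, (-b) ^ k * genPoch c ρ (2 * (k:ℂ) + ν) * (z / 2) ^ (2 * (k:ℂ) + ν) /
    ((k.factorial : ℂ) * Complex.Gamma (ν + (k:ℂ) + 1) * Complex.Gamma (ν + 2 * (k:ℂ) + 1))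

/-- Unified four parameter Bessel function with integer order, powers being integer powers. -/
noncomputable def unifiedGInt (b c ρ : ℂ) (ν : ℤ) (z : ℂ) : ℂ :=
  ∑' k : ℕ, (-b) ^ k * genPoch c ρ (2 * (k:ℂ) + (ν:ℂ)) * (z / 2) ^ (2 * (k:ℤ) + ν) /
    ((k.factorial : ℂ) * Complex.Gamma ((ν:ℂ) + (k:ℂ) + 1) * Complex.Gamma ((ν:ℂ) + 2 * (k:ℂ) + 1))

/-- Pochhammer symbol `(a)_k = Γ(a+k)/Γ(a)`. -/
noncomputable def poch (a : ℂ) (k : ℕ) : ℂ := Complex.Gamma (a + (k:ℂ)) / Complex.Gamma a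

/-- Generalized hypergeometric function `₀F₃`. -/
noncomputable def hyp0F3 (a₁ a₂ a₃ w : ℂ) : ℂ :=
  ∑' k : ℕ, w ^ k / (poch a₁ k * poch a₂ k * poch a₃ k * (k.factorial : ℂ))

/-- Generalized hypergeometric function `₂F₃`. -/
noncomputable def hyp2F3 (a₁ a₂ b₁ b₂ b₃ w : ℂ) : ℂ :=
  ∑' k : ℕ, poch a₁ k * poch a₂ k * w ^ k /
    (poch b₁ k * poch b₂ k * poch b₃ k * (k.factorial : ℂ))

/-- Bessel function of the first kind `J_μ(z)` for real `z > 0`. -/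
noncomputable def besselJ (μ : ℂ) (z : ℝ) : ℂ :=
  ∑' k : ℕ, (-1) ^ k * ((z:ℂ) / 2) ^ (2 * (k:ℂ) + μ) /
    ((k.factorial : ℂ) * Complex.Gamma (μ + (k:ℂ) + 1))

/-- Generalized four parameter spherical Bessel function
`g_ν^{(b,c)}(z;ρ) = √(π/(2z)) · G_{ν+1/2}^{(b,c-1/2)}(z;ρ)`. -/
noncomputable def sphG (b c ν ρ : ℂ) (z : ℝ) : ℂ :=
  (Real.sqrt (π / (2 * z)) : ℂ) * unifiedG b (c - 1/2) (ν + 1/2) ρ (z:ℂ)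

/-- Generalized four parameter Bessel-Clifford function
`C_ν^{(b,λ)}(z;ρ) = z^{-ν/2} · G_ν^{(b,λ)}(2√z;ρ)` for real `z > 0`. -/
noncomputable def cliffC (b lam ν ρ : ℂ) (z : ℝ) : ℂ :=
  (z:ℂ) ^ (-ν / 2) * unifiedG b lam ν ρ ((2 * Real.sqrt z : ℝ) : ℂ)

set_option maxHeartbeats 1000000

/-- `exp(-(e/t)) ≤ n! t^n / e^n` for `t, e > 0`. -/
lemma exp_neg_div_le (n : ℕ) {e t : ℝ} (he : 0 < e) (ht : 0 < t) :
    Real.exp (-(e/t)) ≤ n.factorial * t^n / e^n := by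
  have h1 : (e/t)^n / n.factorial ≤ Real.exp (e/t) := by
    have := Real.pow_div_factorial_le_exp (x := e/t) (by positivity) n
    simpa [Nat.factorial] using this
  have h2 : (0:ℝ) < (e/t)^n / n.factorial := by positivity
  rw [Real.exp_neg]
  rw [inv_le_iff_one_le_mul₀ (Real.exp_pos _)] at *
  calc (1:ℝ) = ((e/t)^n / n.factorial) * (n.factorial * t^n / e^n) := by
        field_simp [div_pow]
        rw [← mul_pow, div_mul_cancel₀ e ht.ne']
    _ ≤ Real.exp (e/t) * (n.factorial * t^n / e^n) := by
        apply mul_le_mul_of_nonneg_right h1 (by positivity)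
    _ = ↑n.factorial * t ^ n / e ^ n * Real.exp (e/t) := by ring

/-- real integrability lemma -/
lemma integrableOn_aux (s : ℝ) {e : ℝ} (he : 0 < e) :
    IntegrableOn (fun t : ℝ => t ^ s * Real.exp (-t - e/t)) (Ioi 0) := by
  set n : ℕ := ⌈-s⌉₊ + 1 with hn
  have hsn : 0 < s + n := by
    have : -s ≤ ⌈-s⌉₊ := by
      rcases le_or_gt (-s) 0 with h | h
      · exact h.trans (Nat.cast_nonneg _)
      · exact Nat.le_ceil _
    have : -s < n := by push_cast [hn]; linarith
    linarith
  have hint : IntegrableOn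
      (fun t : ℝ => (n.factorial / e^n) * (Real.exp (-t) * t ^ (s + n + 1 - 1))) (Ioi 0) :=
    (Real.GammaIntegral_convergent (by linarith : (0:ℝ) < s + n + 1)).const_mul _
  apply hint.mono'
  · apply ContinuousOn.aestronglyMeasurable ?_ measurableSet_Ioi
    have h1 : ContinuousOn (fun t : ℝ => t ^ s) (Ioi 0) := fun x hx =>
      (Real.continuousAt_rpow_const x s (Or.inl (ne_of_gt hx))).continuousWithinAt
    have h2 : ContinuousOn (fun t : ℝ => Real.exp (-t - e/t)) (Ioi 0) :=
      Real.continuous_exp.comp_continuousOn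
        ((continuous_neg.continuousOn).sub
          (continuousOn_const.div continuousOn_id fun x hx => ne_of_gt hx))
    exact h1.mul h2
  · filter_upwards [self_mem_ae_restrict measurableSet_Ioi] with t ht
    simp only [mem_Ioi] at ht
    have h1 : t ^ s * Real.exp (-t - e/t) = (t^s * Real.exp (-(e/t))) * Real.exp (-t) := by
      rw [Real.exp_sub, Real.exp_neg (e/t)]
      field_simp
    rw [Real.norm_of_nonneg (by positivity), h1]
    have h2 : t^s * Real.exp (-(e/t)) ≤ t^s * (n.factorial * t^n / e^n) :=
      mul_le_mul_of_nonneg_left (exp_neg_div_le n he ht) (by positivity)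
    calc t ^ s * Real.exp (-(e/t)) * Real.exp (-t)
        ≤ (t^s * (n.factorial * t^n / e^n)) * Real.exp (-t) :=
          mul_le_mul_of_nonneg_right h2 (Real.exp_pos _).le
      _ = (n.factorial / e^n) * (Real.exp (-t) * t ^ (s + n + 1 - 1)) := by
          rw [show s + (n:ℝ) + 1 - 1 = s + n by ring, Real.rpow_add ht, Real.rpow_natCast]
          field_simp


lemma norm_integrand (x : ℂ) (r : ℝ) {t : ℝ} (ht : 0 < t) :
    ‖(t:ℂ) ^ (x - 1) * Complex.exp (-(t:ℂ) - (r:ℂ) / (t:ℂ))‖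
      = t ^ (x.re - 1) * Real.exp (-t - r/t) := by
  rw [norm_mul, Complex.norm_exp]
  congr 1
  · rw [norm_cpow_eq_rpow_re_of_pos ht]
    simp
  · congr 1
    have : (-(t:ℂ) - (r:ℂ)/(t:ℂ)) = ((-t - r/t : ℝ) : ℂ) := by push_cast; ring
    rw [this, Complex.ofReal_re]

lemma contOn_complex (x : ℂ) (r : ℝ) :
    ContinuousOn (fun t : ℝ => (t:ℂ) ^ (x - 1) * Complex.exp (-(t:ℂ) - (r:ℂ) / (t:ℂ)))
      (Ioi 0) := by
  apply ContinuousOn.mul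
  · exact fun t ht => (continuousAt_ofReal_cpow_const t (x-1)
      (Or.inr (ne_of_gt (mem_Ioi.mp ht)))).continuousWithinAt
  · apply Complex.continuous_exp.comp_continuousOn
    exact (Complex.continuous_ofReal.continuousOn.neg).sub
      (continuousOn_const.div Complex.continuous_ofReal.continuousOn
        (fun t ht => by exact_mod_cast ne_of_gt (mem_Ioi.mp ht)))

lemma integrableOn_complex (x : ℂ) {r : ℝ} (hr : 0 < r) :
    IntegrableOn (fun t : ℝ => (t:ℂ) ^ (x - 1) * Complex.exp (-(t:ℂ) - (r:ℂ) / (t:ℂ)))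
      (Ioi 0) := by
  refine (integrableOn_aux (x.re - 1) hr).mono'
    ((contOn_complex x r).aestronglyMeasurable measurableSet_Ioi) ?_
  filter_upwards [self_mem_ae_restrict measurableSet_Ioi] with t ht
  rw [norm_integrand x r (mem_Ioi.mp ht)]

lemma extGamma_norm_le (x : ℂ) {e r : ℝ} (he : 0 < e) (her : e ≤ r) (hx : -2 < x.re) :
    ‖extGamma (r:ℂ) x‖ ≤ 2 / e^2 * Real.Gamma (x.re + 2) := by
  have hr : 0 < r := he.trans_le her
  have hG : Real.Gamma (x.re + 2) = ∫ t in Ioi (0:ℝ), Real.exp (-t) * t ^ (x.re + 2 - 1) :=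
    Real.Gamma_eq_integral (by linarith)
  have hgint : IntegrableOn (fun t : ℝ => (2/e^2) * (Real.exp (-t) * t ^ (x.re + 2 - 1)))
      (Ioi 0) := (Real.GammaIntegral_convergent (by linarith : (0:ℝ) < x.re + 2)).const_mul _
  have key : ‖extGamma (r:ℂ) x‖ ≤ ∫ t in Ioi (0:ℝ), (2/e^2) * (Real.exp (-t) * t ^ (x.re + 2 - 1)) := by
    apply norm_integral_le_of_norm_le hgint
    filter_upwards [self_mem_ae_restrict measurableSet_Ioi] with t ht'
    have ht : 0 < t := mem_Ioi.mp ht'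
    rw [norm_integrand x r ht]
    have h1 : Real.exp (-t - r/t) = Real.exp (-(r/t)) * Real.exp (-t) := by
      rw [← Real.exp_add]; ring_nf
    have h2 : Real.exp (-(r/t)) ≤ 2 * t^2 / e^2 := by
      calc Real.exp (-(r/t)) ≤ Real.exp (-(e/t)) := by
            apply Real.exp_le_exp.mpr
            rw [neg_le_neg_iff]
            gcongr
        _ ≤ (Nat.factorial 2) * t^2 / e^2 := exp_neg_div_le 2 he ht
        _ = 2 * t^2 / e^2 := by norm_num
    calc t ^ (x.re - 1) * Real.exp (-t - r/t)
        = (t ^ (x.re - 1) * Real.exp (-(r/t))) * Real.exp (-t) := by rw [h1]; ring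
      _ ≤ (t ^ (x.re - 1) * (2 * t^2 / e^2)) * Real.exp (-t) := by
          apply mul_le_mul_of_nonneg_right _ (Real.exp_pos _).le
          exact mul_le_mul_of_nonneg_left h2 (by positivity)
      _ = (2/e^2) * (Real.exp (-t) * t ^ (x.re + 2 - 1)) := by
          rw [show x.re + 2 - 1 = (x.re - 1) + 2 by ring, Real.rpow_add ht,
            Real.rpow_two]
          field_simp
  calc ‖extGamma (r:ℂ) x‖ ≤ _ := key
    _ = 2 / e^2 * Real.Gamma (x.re + 2) := by
        rw [hG, integral_const_mul]

lemma hasDerivAt_extGamma (x : ℂ) {r : ℝ} (hr : 0 < r) :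
    HasDerivAt (fun s : ℝ => extGamma (s:ℂ) x) (-(extGamma (r:ℂ) (x - 1))) r := by
  have hr2 : 0 < r/2 := half_pos hr
  set F : ℝ → ℝ → ℂ := fun s t => (t:ℂ) ^ (x - 1) * Complex.exp (-(t:ℂ) - (s:ℂ) / (t:ℂ))
    with hF
  set F' : ℝ → ℝ → ℂ := fun s t => -((t:ℂ) ^ (x - 1 - 1) * Complex.exp (-(t:ℂ) - (s:ℂ) / (t:ℂ)))
    with hF'
  have key := hasDerivAt_integral_of_dominated_loc_of_deriv_le (μ := volume.restrict (Ioi 0))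
    (F := F) (F' := F') (x₀ := r) (s := Metric.ball r (r/2))
    (bound := fun t => t ^ ((x-1).re - 1) * Real.exp (-t - (r/2)/t)) (Metric.ball_mem_nhds r hr2)
    (Filter.Eventually.of_forall fun s =>
      (contOn_complex x s).aestronglyMeasurable measurableSet_Ioi)
    (integrableOn_complex x hr)
    (((contOn_complex (x-1) r).aestronglyMeasurable measurableSet_Ioi).neg)
    ?_ (integrableOn_aux ((x-1).re - 1) hr2) ?_
  · have h2 : (∫ t in Ioi (0:ℝ), F' r t) = -(extGamma (r:ℂ) (x - 1)) := by
      rw [show (fun t : ℝ => F' r t) = fun t : ℝ =>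
        -((t:ℂ) ^ ((x - 1) - 1) * Complex.exp (-(t:ℂ) - ((r:ℝ):ℂ) / (t:ℂ))) from rfl,
        integral_neg]
      rfl
    rw [← h2]
    exact key.2
  · filter_upwards [self_mem_ae_restrict measurableSet_Ioi] with t ht' s hs
    have ht : 0 < t := mem_Ioi.mp ht'
    have hs2 : r/2 ≤ s := by
      have := abs_lt.mp (mem_ball_iff_norm.mp hs)
      have := abs_lt.mp (mem_ball_iff_norm.mp hs)
      linarith [this.1]
    rw [hF', norm_neg, norm_integrand (x-1) s ht]
    apply mul_le_mul_of_nonneg_left _ (by positivity)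
    apply Real.exp_le_exp.mpr
    have : (r/2)/t ≤ s/t := by gcongr
    linarith
  · filter_upwards [self_mem_ae_restrict measurableSet_Ioi] with t ht' s hs
    have ht : 0 < t := mem_Ioi.mp ht'
    have htC : (t:ℂ) ≠ 0 := by exact_mod_cast ne_of_gt ht
    have h1 : HasDerivAt (fun w : ℂ => -(t:ℂ) - w / (t:ℂ)) (-(1/(t:ℂ))) s :=
      ((hasDerivAt_id (s:ℂ)).div_const (t:ℂ)).const_sub (-(t:ℂ))
    have h2 := ((h1.cexp).const_mul ((t:ℂ) ^ (x-1))).comp_ofReal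
    refine h2.congr_deriv ?_
    rw [hF']
    have hpow : (t:ℂ) ^ (x - 1 - 1) = (t:ℂ) ^ (x - 1) * ((t:ℂ))⁻¹ := by
      rw [show x - 1 - 1 = (x - 1) - 1 from rfl, Complex.cpow_sub _ _ htC, Complex.cpow_one,
        div_eq_mul_inv]
    beta_reduce
    rw [hpow, one_div]
    generalize (t:ℂ) ^ (x - 1) = A
    generalize Complex.exp (-(t:ℂ) - (s:ℂ)/(t:ℂ)) = E
    ring


lemma summable_aux {B A : ℝ} (hB : 0 ≤ B) (hA : 0 < A) {ν : ℂ} (hν : -1 < ν.re) :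
    Summable (fun k : ℕ => B ^ k * Real.Gamma (A + 2*(k:ℝ) + 1) /
      ((k.factorial : ℝ) * ‖Complex.Gamma (ν + (k:ℂ) + 1)‖ *
        ‖Complex.Gamma (ν + 2*(k:ℂ) + 1)‖)) := by
  set u : ℕ → ℝ := fun k => B ^ k * Real.Gamma (A + 2*(k:ℝ) + 1) /
      ((k.factorial : ℝ) * ‖Complex.Gamma (ν + (k:ℂ) + 1)‖ *
        ‖Complex.Gamma (ν + 2*(k:ℂ) + 1)‖) with hu
  -- basic positivity facts
  have hG1 : ∀ k : ℕ, Complex.Gamma (ν + (k:ℂ) + 1) ≠ 0 := fun k =>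
    Complex.Gamma_ne_zero_of_re_pos (by simp; linarith [Nat.cast_nonneg (α := ℝ) k])
  have hG2 : ∀ k : ℕ, Complex.Gamma (ν + 2*(k:ℂ) + 1) ≠ 0 := fun k =>
    Complex.Gamma_ne_zero_of_re_pos (by simp; linarith [Nat.cast_nonneg (α := ℝ) k])
  have hGA : ∀ k : ℕ, 0 < Real.Gamma (A + 2*(k:ℝ) + 1) := fun k =>
    Real.Gamma_pos_of_pos (by positivity)
  have hupos : ∀ k : ℕ, 0 ≤ u k := fun k => by
    have := (hGA k).le
    have h1 : (0:ℝ) < ‖Complex.Gamma (ν + (k:ℂ) + 1)‖ := norm_pos_iff.mpr (hG1 k)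
    have h2 : (0:ℝ) < ‖Complex.Gamma (ν + 2*(k:ℂ) + 1)‖ := norm_pos_iff.mpr (hG2 k)
    have h3 : (0:ℝ) < (k.factorial : ℝ) := by exact_mod_cast k.factorial_pos
    positivity
  -- recurrence
  have hrec : ∀ k : ℕ, u (k+1) = (B * (A+2*k+2) * (A+2*k+1) /
      (((k:ℝ)+1) * ‖ν + (k:ℂ) + 1‖ * ‖ν + 2*(k:ℂ) + 1‖ * ‖ν + 2*(k:ℂ) + 2‖)) * u k := by
    intro k
    have e1 : Real.Gamma (A + 2*((k:ℝ)+1) + 1)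
        = (A+2*k+2) * ((A+2*k+1) * Real.Gamma (A + 2*(k:ℝ) + 1)) := by
      rw [show A + 2*((k:ℝ)+1) + 1 = (A+2*(k:ℝ)+2) + 1 by ring,
        Real.Gamma_add_one (by positivity),
        show A + 2*(k:ℝ) + 2 = (A+2*(k:ℝ)+1) + 1 by ring,
        Real.Gamma_add_one (by positivity)]
    have e2 : Complex.Gamma (ν + ((k:ℂ)+1) + 1)
        = (ν + (k:ℂ) + 1) * Complex.Gamma (ν + (k:ℂ) + 1) := by
      rw [show ν + ((k:ℂ)+1) + 1 = (ν + (k:ℂ) + 1) + 1 by ring, Complex.Gamma_add_one]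
      intro h
      have := congrArg Complex.re h
      simp at this
      linarith [Nat.cast_nonneg (α := ℝ) k]
    have e3 : Complex.Gamma (ν + 2*((k:ℂ)+1) + 1)
        = (ν + 2*(k:ℂ) + 2) * ((ν + 2*(k:ℂ) + 1) * Complex.Gamma (ν + 2*(k:ℂ) + 1)) := by
      rw [show ν + 2*((k:ℂ)+1) + 1 = (ν + 2*(k:ℂ) + 2) + 1 by ring, Complex.Gamma_add_one,
        show ν + 2*(k:ℂ) + 2 = (ν + 2*(k:ℂ) + 1) + 1 by ring, Complex.Gamma_add_one]
      · intro h
        have := congrArg Complex.re h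
        simp at this
        linarith [Nat.cast_nonneg (α := ℝ) k]
      · intro h
        have := congrArg Complex.re h
        simp at this
        linarith [Nat.cast_nonneg (α := ℝ) k]
    have h1 : (0:ℝ) < ‖Complex.Gamma (ν + (k:ℂ) + 1)‖ := norm_pos_iff.mpr (hG1 k)
    have h2 : (0:ℝ) < ‖Complex.Gamma (ν + 2*(k:ℂ) + 1)‖ := norm_pos_iff.mpr (hG2 k)
    have h3 : (0:ℝ) < (k.factorial : ℝ) := by exact_mod_cast k.factorial_pos
    have hn1 : (0:ℝ) < ‖ν + (k:ℂ) + 1‖ := by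
      rw [norm_pos_iff]
      intro h
      have := congrArg Complex.re h
      simp at this
      linarith [Nat.cast_nonneg (α := ℝ) k]
    have hn2 : (0:ℝ) < ‖ν + 2*(k:ℂ) + 1‖ := by
      rw [norm_pos_iff]
      intro h
      have := congrArg Complex.re h
      simp at this
      linarith [Nat.cast_nonneg (α := ℝ) k]
    have hn3 : (0:ℝ) < ‖ν + 2*(k:ℂ) + 2‖ := by
      rw [norm_pos_iff]
      intro h
      have := congrArg Complex.re h
      simp at this
      linarith [Nat.cast_nonneg (α := ℝ) k]
    rw [hu]
    simp only [Nat.cast_succ, Nat.factorial_succ, Nat.cast_mul, pow_succ]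
    push_cast
    rw [e1, e2, e3, norm_mul, norm_mul, norm_mul]
    field_simp
  apply summable_of_ratio_norm_eventually_le (r := 1/2) (by norm_num)
  rw [Filter.eventually_atTop]
  refine ⟨max (⌈A⌉₊ + 2) (⌈72*B⌉₊ + 1), fun k hk => ?_⟩
  have hk1 : (⌈A⌉₊:ℕ) + 2 ≤ k := le_trans (le_max_left _ _) hk
  have hk2 : (⌈72*B⌉₊:ℕ) + 1 ≤ k := le_trans (le_max_right _ _) hk
  have hkA : A + 2*(k:ℝ) + 2 ≤ 6*k := by
    have h1 : A ≤ ⌈A⌉₊ := Nat.le_ceil A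
    have h2 : ((⌈A⌉₊:ℕ):ℝ) + 2 ≤ (k:ℝ) := by exact_mod_cast hk1
    linarith
  have hkB : 72*B ≤ (k:ℝ) := by
    have h1 : 72*B ≤ ⌈72*B⌉₊ := Nat.le_ceil _
    have h2 : ((⌈72*B⌉₊:ℕ):ℝ) + 1 ≤ (k:ℝ) := by exact_mod_cast hk2
    linarith
  have hkpos : (1:ℝ) ≤ (k:ℝ) := by
    have : 1 ≤ k := le_trans (by omega) hk1
    exact_mod_cast this
  -- bound the ratio
  have hq : B * (A+2*k+2) * (A+2*k+1) /
      (((k:ℝ)+1) * ‖ν + (k:ℂ) + 1‖ * ‖ν + 2*(k:ℂ) + 1‖ * ‖ν + 2*(k:ℂ) + 2‖) ≤ 1/2 := by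
    have hd1 : (k:ℝ) ≤ (k:ℝ) + 1 := by linarith
    have hd2 : (k:ℝ) ≤ ‖ν + (k:ℂ) + 1‖ := by
      refine le_trans ?_ (Complex.re_le_norm _)
      simp
      linarith
    have hd3 : (k:ℝ) ≤ ‖ν + 2*(k:ℂ) + 1‖ := by
      refine le_trans ?_ (Complex.re_le_norm _)
      simp
      linarith
    have hd4 : (k:ℝ) ≤ ‖ν + 2*(k:ℂ) + 2‖ := by
      refine le_trans ?_ (Complex.re_le_norm _)
      simp
      linarith
    have hnum : B * (A+2*k+2) * (A+2*k+1) ≤ B * (6*k) * (6*k) := by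
      have h1 : 0 ≤ A + 2*(k:ℝ) + 1 := by positivity
      have h2 : A + 2*(k:ℝ) + 1 ≤ 6*k := by linarith
      have h3 : 0 ≤ A + 2*(k:ℝ) + 2 := by positivity
      have h2' : A + 2*(k:ℝ) + 2 ≤ 6*k := hkA
      gcongr
    have hden : (k:ℝ) * k * k * k ≤
        ((k:ℝ)+1) * ‖ν + (k:ℂ) + 1‖ * ‖ν + 2*(k:ℂ) + 1‖ * ‖ν + 2*(k:ℂ) + 2‖ := by
      have k0 : (0:ℝ) ≤ k := by linarith
      gcongr <;> first | exact hd1 | exact hd2 | exact hd3 | exact hd4 | positivity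
    have hdenpos : (0:ℝ) < (k:ℝ) * k * k * k := by positivity
    calc B * (A+2*k+2) * (A+2*k+1) /
          (((k:ℝ)+1) * ‖ν + (k:ℂ) + 1‖ * ‖ν + 2*(k:ℂ) + 1‖ * ‖ν + 2*(k:ℂ) + 2‖)
        ≤ B * (6*k) * (6*k) / ((k:ℝ) * k * k * k) := by
          apply div_le_div₀ (by positivity) hnum (by positivity) hden
      _ = 36 * B / ((k:ℝ) * k) := by
          field_simp
          ring
      _ ≤ 1/2 := by
          rw [div_le_div_iff₀ (by positivity) (by norm_num)]
          nlinarith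
  have h1 := hupos k
  have h2 := hupos (k+1)
  rw [Real.norm_of_nonneg h2, Real.norm_of_nonneg h1, hrec k]
  have hqnonneg : 0 ≤ B * (A+2*k+2) * (A+2*k+1) /
      (((k:ℝ)+1) * ‖ν + (k:ℂ) + 1‖ * ‖ν + 2*(k:ℂ) + 1‖ * ‖ν + 2*(k:ℂ) + 2‖) := by
    have : (0:ℝ) ≤ A + 2*(k:ℝ) + 1 := by positivity
    positivity
  exact mul_le_mul_of_nonneg_right hq h1

theorem stmt10 (b c ν : ℂ) (hc : 1 < c.re) (hν : -1 < ν.re)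
    (z : ℝ) (hz : 0 < z) (ρ : ℝ) (hρ : 0 < ρ) :
    deriv (fun r : ℝ => unifiedG b c ν (r:ℂ) (z:ℂ)) ρ =
      -(1 / (c - 1)) * unifiedG b (c - 1) ν (ρ:ℂ) (z:ℂ) := by
  have hρ2 : 0 < ρ/2 := half_pos hρ
  have hz2 : 0 < z/2 := half_pos hz
  have hcre : 0 < c.re := by linarith
  have hΓc : Complex.Gamma c ≠ 0 := Complex.Gamma_ne_zero_of_re_pos hcre
  have hc1re : 0 < (c-1).re := by simp [Complex.sub_re]; linarith
  have hc1 : c - 1 ≠ 0 := fun h => by rw [h] at hc1re; simp at hc1re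
  have hΓc1 : Complex.Gamma (c-1) ≠ 0 := Complex.Gamma_ne_zero_of_re_pos hc1re
  have hΓfact : Complex.Gamma c = (c-1) * Complex.Gamma (c-1) := by
    conv_lhs => rw [show c = (c-1)+1 by ring]
    exact Complex.Gamma_add_one _ hc1
  set A : ℝ := c.re + ν.re with hA
  have hApos : 0 < A := by rw [hA]; linarith
  set B : ℝ := ‖b‖ * (z/2)^2 with hB
  have hBpos : 0 ≤ B := by positivity
  -- term functions
  set g : ℕ → ℝ → ℂ := fun k r =>
    (-b) ^ k * genPoch c (r:ℂ) (2 * (k:ℂ) + ν) * ((z:ℂ) / 2) ^ (2 * (k:ℂ) + ν) /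
      ((k.factorial : ℂ) * Complex.Gamma (ν + (k:ℂ) + 1) * Complex.Gamma (ν + 2 * (k:ℂ) + 1))
    with hgdef
  set g' : ℕ → ℝ → ℂ := fun k r =>
    (-b) ^ k * (-(extGamma (r:ℂ) (c + (2 * (k:ℂ) + ν) - 1)) / Complex.Gamma c) *
        ((z:ℂ) / 2) ^ (2 * (k:ℂ) + ν) /
      ((k.factorial : ℂ) * Complex.Gamma (ν + (k:ℂ) + 1) * Complex.Gamma (ν + 2 * (k:ℂ) + 1))
    with hg'def
  -- norm facts
  have hG1 : ∀ k : ℕ, Complex.Gamma (ν + (k:ℂ) + 1) ≠ 0 := fun k =>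
    Complex.Gamma_ne_zero_of_re_pos (by simp; linarith [Nat.cast_nonneg (α := ℝ) k])
  have hG2 : ∀ k : ℕ, Complex.Gamma (ν + 2*(k:ℂ) + 1) ≠ 0 := fun k =>
    Complex.Gamma_ne_zero_of_re_pos (by simp; linarith [Nat.cast_nonneg (α := ℝ) k])
  have hPnorm : ∀ k : ℕ, ‖((z:ℂ)/2) ^ (2*(k:ℂ)+ν)‖ = ((z/2:ℝ)^2)^k * (z/2:ℝ)^ν.re := by
    intro k
    have h1 : ((z:ℂ)/2) = (((z/2:ℝ)):ℂ) := by push_cast; ring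
    rw [h1, norm_cpow_eq_rpow_re_of_pos hz2]
    rw [show (2*(k:ℂ)+ν).re = 2*(k:ℝ)+ν.re by simp, Real.rpow_add hz2,
      show (2*(k:ℝ)) = ((2*k : ℕ):ℝ) by push_cast; ring, Real.rpow_natCast, pow_mul]
  have hDnorm : ∀ k : ℕ, ‖(k.factorial : ℂ) * Complex.Gamma (ν + (k:ℂ) + 1) *
      Complex.Gamma (ν + 2*(k:ℂ) + 1)‖
      = (k.factorial : ℝ) * ‖Complex.Gamma (ν + (k:ℂ) + 1)‖ *
        ‖Complex.Gamma (ν + 2*(k:ℂ) + 1)‖ := by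
    intro k
    rw [norm_mul, norm_mul]
    norm_num
  have hren : ∀ k : ℕ, (c + (2 * (k:ℂ) + ν)).re = A + 2*(k:ℝ) := by
    intro k
    simp [hA, Complex.add_re, Complex.mul_re]
    ring
  set u : ℕ → ℝ := fun k =>
    ((2/(ρ/2)^2) * ((z/2:ℝ) ^ ν.re / ‖Complex.Gamma c‖)) *
      (B ^ k * Real.Gamma (A + 2*(k:ℝ) + 1) /
        ((k.factorial : ℝ) * ‖Complex.Gamma (ν + (k:ℂ) + 1)‖ *
          ‖Complex.Gamma (ν + 2*(k:ℂ) + 1)‖)) with hudef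
  have hu : Summable u := (summable_aux hBpos hApos hν).mul_left _
  set T : Set ℝ := Ioo (ρ/2) (2*ρ) with hT
  have hρT : ρ ∈ T := ⟨by linarith, by linarith⟩
  -- derivative of each term
  have hg : ∀ k : ℕ, ∀ r : ℝ, r ∈ T → HasDerivAt (g k) (g' k r) r := by
    intro k r hr
    have hrpos : 0 < r := lt_trans hρ2 hr.1
    have h := (hasDerivAt_extGamma (c + (2 * (k:ℂ) + ν)) hrpos).const_mul
      ((-b) ^ k * ((z:ℂ) / 2) ^ (2 * (k:ℂ) + ν) / Complex.Gamma c /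
        ((k.factorial : ℂ) * Complex.Gamma (ν + (k:ℂ) + 1) * Complex.Gamma (ν + 2 * (k:ℂ) + 1)))
    have hfun : g k = fun s : ℝ =>
        ((-b) ^ k * ((z:ℂ) / 2) ^ (2 * (k:ℂ) + ν) / Complex.Gamma c /
          ((k.factorial : ℂ) * Complex.Gamma (ν + (k:ℂ) + 1) *
            Complex.Gamma (ν + 2 * (k:ℂ) + 1))) * extGamma (s:ℂ) (c + (2 * (k:ℂ) + ν)) := by
      funext s
      simp only [hgdef, genPoch, div_eq_mul_inv, mul_inv]
      ring
    have hval : g' k r =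
        ((-b) ^ k * ((z:ℂ) / 2) ^ (2 * (k:ℂ) + ν) / Complex.Gamma c /
          ((k.factorial : ℂ) * Complex.Gamma (ν + (k:ℂ) + 1) *
            Complex.Gamma (ν + 2 * (k:ℂ) + 1))) *
          (-(extGamma (r:ℂ) (c + (2 * (k:ℂ) + ν) - 1))) := by
      simp only [hg'def, div_eq_mul_inv, mul_inv]
      ring
    rw [hfun, hval]
    exact h
  -- bound on the derivatives
  have hbound : ∀ k : ℕ, ∀ r : ℝ, r ∈ T → ‖g' k r‖ ≤ u k := by
    intro k r hr
    have hre : ρ/2 ≤ r := le_of_lt hr.1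
    have hxre : (c + (2 * (k:ℂ) + ν) - 1).re = A + 2*(k:ℝ) - 1 := by
      simp [Complex.sub_re, hren k]
    have hEG := extGamma_norm_le (c + (2 * (k:ℂ) + ν) - 1) hρ2 hre
      (by rw [hxre]; have h0 : (0:ℝ) ≤ (k:ℝ) := Nat.cast_nonneg k; linarith)
    rw [hxre, show A + 2*(k:ℝ) - 1 + 2 = A + 2*(k:ℝ) + 1 by ring] at hEG
    have hkf : (0:ℝ) < (k.factorial : ℝ) := by exact_mod_cast k.factorial_pos
    have hn1 : (0:ℝ) < ‖Complex.Gamma (ν + (k:ℂ) + 1)‖ := norm_pos_iff.mpr (hG1 k)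
    have hn2 : (0:ℝ) < ‖Complex.Gamma (ν + 2*(k:ℂ) + 1)‖ := norm_pos_iff.mpr (hG2 k)
    have hΓcn : (0:ℝ) < ‖Complex.Gamma c‖ := norm_pos_iff.mpr hΓc
    have hLHS : ‖g' k r‖ = ‖extGamma (r:ℂ) (c + (2 * (k:ℂ) + ν) - 1)‖ *
        (‖b‖ ^ k * (((z/2:ℝ)^2)^k * (z/2:ℝ)^ν.re) / ‖Complex.Gamma c‖ /
          ((k.factorial : ℝ) * ‖Complex.Gamma (ν + (k:ℂ) + 1)‖ *
            ‖Complex.Gamma (ν + 2*(k:ℂ) + 1)‖)) := by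
      simp only [hg'def]
      rw [norm_div, norm_mul, norm_mul, norm_div, norm_neg, norm_pow, norm_neg,
        hPnorm k, hDnorm k]
      ring
    rw [hLHS, hudef]
    have hrest : (0:ℝ) ≤ ‖b‖ ^ k * (((z/2:ℝ)^2)^k * (z/2:ℝ)^ν.re) / ‖Complex.Gamma c‖ /
          ((k.factorial : ℝ) * ‖Complex.Gamma (ν + (k:ℂ) + 1)‖ *
            ‖Complex.Gamma (ν + 2*(k:ℂ) + 1)‖) := by positivity
    calc ‖extGamma (r:ℂ) (c + (2 * (k:ℂ) + ν) - 1)‖ *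
        (‖b‖ ^ k * (((z/2:ℝ)^2)^k * (z/2:ℝ)^ν.re) / ‖Complex.Gamma c‖ /
          ((k.factorial : ℝ) * ‖Complex.Gamma (ν + (k:ℂ) + 1)‖ *
            ‖Complex.Gamma (ν + 2*(k:ℂ) + 1)‖))
        ≤ (2/(ρ/2)^2 * Real.Gamma (A + 2*(k:ℝ) + 1)) *
          (‖b‖ ^ k * (((z/2:ℝ)^2)^k * (z/2:ℝ)^ν.re) / ‖Complex.Gamma c‖ /
          ((k.factorial : ℝ) * ‖Complex.Gamma (ν + (k:ℂ) + 1)‖ *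
            ‖Complex.Gamma (ν + 2*(k:ℂ) + 1)‖)) :=
        mul_le_mul_of_nonneg_right hEG hrest
      _ = ((2/(ρ/2)^2) * ((z/2:ℝ) ^ ν.re / ‖Complex.Gamma c‖)) *
          (B ^ k * Real.Gamma (A + 2*(k:ℝ) + 1) /
            ((k.factorial : ℝ) * ‖Complex.Gamma (ν + (k:ℂ) + 1)‖ *
              ‖Complex.Gamma (ν + 2*(k:ℂ) + 1)‖)) := by
        rw [hB, mul_pow]
        field_simp
  -- summability of the series at ρ
  have hsum0 : Summable (fun k : ℕ => g k ρ) := by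
    set u2 : ℕ → ℝ := fun k =>
      ((2/(ρ/2)^2) * ((z/2:ℝ) ^ ν.re / ‖Complex.Gamma c‖)) *
        (B ^ k * Real.Gamma ((A+1) + 2*(k:ℝ) + 1) /
          ((k.factorial : ℝ) * ‖Complex.Gamma (ν + (k:ℂ) + 1)‖ *
            ‖Complex.Gamma (ν + 2*(k:ℂ) + 1)‖)) with hu2def
    have hu2 : Summable u2 := (summable_aux hBpos (by linarith : (0:ℝ) < A+1) hν).mul_left _
    apply Summable.of_norm_bounded hu2
    intro k
    have hre : ρ/2 ≤ ρ := by linarith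
    have hxre : (c + (2 * (k:ℂ) + ν)).re = A + 2*(k:ℝ) := hren k
    have hEG := extGamma_norm_le (c + (2 * (k:ℂ) + ν)) hρ2 hre
      (by rw [hxre]; have h0 : (0:ℝ) ≤ (k:ℝ) := Nat.cast_nonneg k; linarith)
    rw [hxre, show A + 2*(k:ℝ) + 2 = (A+1) + 2*(k:ℝ) + 1 by ring] at hEG
    have hkf : (0:ℝ) < (k.factorial : ℝ) := by exact_mod_cast k.factorial_pos
    have hn1 : (0:ℝ) < ‖Complex.Gamma (ν + (k:ℂ) + 1)‖ := norm_pos_iff.mpr (hG1 k)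
    have hn2 : (0:ℝ) < ‖Complex.Gamma (ν + 2*(k:ℂ) + 1)‖ := norm_pos_iff.mpr (hG2 k)
    have hΓcn : (0:ℝ) < ‖Complex.Gamma c‖ := norm_pos_iff.mpr hΓc
    have hLHS : ‖g k ρ‖ = ‖extGamma (ρ:ℂ) (c + (2 * (k:ℂ) + ν))‖ *
        (‖b‖ ^ k * (((z/2:ℝ)^2)^k * (z/2:ℝ)^ν.re) / ‖Complex.Gamma c‖ /
          ((k.factorial : ℝ) * ‖Complex.Gamma (ν + (k:ℂ) + 1)‖ *
            ‖Complex.Gamma (ν + 2*(k:ℂ) + 1)‖)) := by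
      simp only [hgdef, genPoch]
      rw [norm_div, norm_mul, norm_mul, norm_div, norm_pow, norm_neg, hPnorm k, hDnorm k]
      ring
    rw [hLHS, hu2def]
    have hrest : (0:ℝ) ≤ ‖b‖ ^ k * (((z/2:ℝ)^2)^k * (z/2:ℝ)^ν.re) / ‖Complex.Gamma c‖ /
          ((k.factorial : ℝ) * ‖Complex.Gamma (ν + (k:ℂ) + 1)‖ *
            ‖Complex.Gamma (ν + 2*(k:ℂ) + 1)‖) := by positivity
    calc ‖extGamma (ρ:ℂ) (c + (2 * (k:ℂ) + ν))‖ *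
        (‖b‖ ^ k * (((z/2:ℝ)^2)^k * (z/2:ℝ)^ν.re) / ‖Complex.Gamma c‖ /
          ((k.factorial : ℝ) * ‖Complex.Gamma (ν + (k:ℂ) + 1)‖ *
            ‖Complex.Gamma (ν + 2*(k:ℂ) + 1)‖))
        ≤ (2/(ρ/2)^2 * Real.Gamma ((A+1) + 2*(k:ℝ) + 1)) *
          (‖b‖ ^ k * (((z/2:ℝ)^2)^k * (z/2:ℝ)^ν.re) / ‖Complex.Gamma c‖ /
          ((k.factorial : ℝ) * ‖Complex.Gamma (ν + (k:ℂ) + 1)‖ *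
            ‖Complex.Gamma (ν + 2*(k:ℂ) + 1)‖)) :=
        mul_le_mul_of_nonneg_right hEG hrest
      _ = ((2/(ρ/2)^2) * ((z/2:ℝ) ^ ν.re / ‖Complex.Gamma c‖)) *
          (B ^ k * Real.Gamma ((A+1) + 2*(k:ℝ) + 1) /
            ((k.factorial : ℝ) * ‖Complex.Gamma (ν + (k:ℂ) + 1)‖ *
              ‖Complex.Gamma (ν + 2*(k:ℂ) + 1)‖)) := by
        rw [hB, mul_pow]
        field_simp
  -- the termwise differentiation
  have hmain : HasDerivAt (fun r : ℝ => ∑' k : ℕ, g k r) (∑' k : ℕ, g' k ρ) ρ :=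
    hasDerivAt_tsum_of_isPreconnected hu isOpen_Ioo isPreconnected_Ioo hg hbound hρT hsum0 hρT
  have hmain' : HasDerivAt (fun r : ℝ => unifiedG b c ν (r:ℂ) (z:ℂ)) (∑' k : ℕ, g' k ρ) ρ := hmain
  rw [hmain'.deriv]
  -- identify the sum of derivatives with the right-hand side
  have hterm : ∀ k : ℕ, g' k ρ = -(1 / (c - 1)) *
      ((-b) ^ k * genPoch (c-1) (ρ:ℂ) (2 * (k:ℂ) + ν) * (((z:ℂ)) / 2) ^ (2 * (k:ℂ) + ν) /
        ((k.factorial : ℂ) * Complex.Gamma (ν + (k:ℂ) + 1) *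
          Complex.Gamma (ν + 2 * (k:ℂ) + 1))) := by
    intro k
    have harg : c + (2 * (k:ℂ) + ν) - 1 = (c - 1) + (2 * (k:ℂ) + ν) := by ring
    simp only [hg'def, genPoch, harg, hΓfact, div_eq_mul_inv, mul_inv]
    ring
  calc (∑' k : ℕ, g' k ρ) = ∑' k : ℕ, -(1 / (c - 1)) *
      ((-b) ^ k * genPoch (c-1) (ρ:ℂ) (2 * (k:ℂ) + ν) * (((z:ℂ)) / 2) ^ (2 * (k:ℂ) + ν) /
        ((k.factorial : ℂ) * Complex.Gamma (ν + (k:ℂ) + 1) *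
          Complex.Gamma (ν + 2 * (k:ℂ) + 1))) := tsum_congr hterm
    _ = -(1 / (c - 1)) * unifiedG b (c - 1) ν (ρ:ℂ) (z:ℂ) := tsum_mul_left
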